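/- Let Λ be a free ℤ-module of rank 2 with a symmetric bilinear form of signature (1,1) that is even (all self-intersections even). Then there exists a basis {F1, F2} of Λ such that F1·F1 ≥ 0, F1·F2 ≥ 0, and F2·F2 < 0. -/

import Mathlib

/-- quadratic form value -/
def qf (a m b p s : ℤ) : ℤ := a*p^2 + 2*m*p*s + b*s^2

lemma qf_neg_exists (a m b : ℤ) (h : a*b - m^2 < 0) : ∃ p s : ℤ, qf a m b p s < 0 := by
  rcases lt_or_ge b 0 with hb | hb
  · exact ⟨0, 1, by simpa [qf] using hb⟩
  rcases lt_trichotomy a 0 with ha | ha | ha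
  · exact ⟨1, 0, by simpa [qf] using ha⟩
  · refine ⟨-m*(b+2), 1, ?_⟩
    have hm : 1 ≤ m^2 := by nlinarith
    simp only [qf]
    nlinarith
  · refine ⟨-m, a, ?_⟩
    simp only [qf]
    nlinarith

lemma qf_key (a' m' b' D : ℤ) (hb' : b' < 0) (hD : a'*b' - m'^2 = D) (hDneg : D < 0)
    (hmax : ∀ k : ℤ, a' + 2*m'*k + b'*k^2 < 0 → a' + 2*m'*k + b'*k^2 ≤ b') :
    ∃ k : ℤ, 0 ≤ a' + 2*m'*k + b'*k^2 := by
  by_contra hcon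
  push_neg at hcon
  set c : ℤ := -b' with hc
  have hcpos : 0 < c := by omega
  set r : ℤ := m' % c with hr
  have hr0 : 0 ≤ r := Int.emod_nonneg m' (by omega)
  have hr1 : r < c := Int.emod_lt_of_pos m' hcpos
  have hdiv : c * (m' / c) + r = m' := Int.mul_ediv_add_emod m' c
  obtain ⟨k0, hk0⟩ : ∃ k0 : ℤ, 4*(m' + k0*b')^2 ≤ b'^2 := by
    rcases le_or_gt (2*r) c with h2 | h2
    · refine ⟨m' / c, ?_⟩
      have : m' + (m' / c) * b' = r := by rw [hc] at *; linarith [hdiv]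
      rw [this]
      nlinarith
    · refine ⟨m' / c + 1, ?_⟩
      have : m' + (m' / c + 1) * b' = r - c := by rw [hc] at *; nlinarith [hdiv]
      rw [this]
      nlinarith
  have ht : a' + 2*m'*k0 + b'*k0^2 < 0 := hcon k0
  have ht2 : a' + 2*m'*k0 + b'*k0^2 ≤ b' := hmax k0 ht
  have hid : b' * (a' + 2*m'*k0 + b'*k0^2) = (m' + k0*b')^2 + D := by
    rw [← hD]; ring

  nlinarith [sq_nonneg b']

/-- An even lattice of rank two and signature (1,1) (equivalently, with Gram
determinant < 0) has a basis `F1, F2` with `F1·F1 ≥ 0`, `F1·F2 ≥ 0`, `F2·F2 < 0`. -/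
theorem stmt_4 (Λ : Type*) [AddCommGroup Λ] [Module ℤ Λ]
    (B : Λ →ₗ[ℤ] Λ →ₗ[ℤ] ℤ)
    (hsymm : ∀ x y, B x y = B y x)
    (heven : ∀ x, Even (B x x))
    (bas : Module.Basis (Fin 2) ℤ Λ)
    (hsig : B (bas 0) (bas 0) * B (bas 1) (bas 1) - (B (bas 0) (bas 1)) ^ 2 < 0) :
    ∃ g : Module.Basis (Fin 2) ℤ Λ,
      0 ≤ B (g 0) (g 0) ∧ 0 ≤ B (g 0) (g 1) ∧ B (g 1) (g 1) < 0 := by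
  classical
  set e0 := bas 0 with he0
  set e1 := bas 1 with he1
  set a := B e0 e0 with ha
  set m := B e0 e1 with hm
  set b := B e1 e1 with hb
  have hsig' : a * b - m ^ 2 < 0 := hsig
  -- bilinear expansion
  have hBval : ∀ p s u v : ℤ, B (p • e0 + s • e1) (u • e0 + v • e1)
      = a*p*u + m*(p*v + s*u) + b*s*v := by
    intro p s u v
    rw [ha, hm, hb]
    simp [hsymm e1 e0]
    ring
  have hQ : ∀ p s : ℤ, B (p • e0 + s • e1) (p • e0 + s • e1) = qf a m b p s := by
    intro p s
    rw [hBval]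
    simp only [qf]; ring
  -- minimal negative value
  set P : ℕ → Prop := fun n => ∃ p s : ℤ, qf a m b p s = -((n:ℤ)+1) with hPdef
  have hPex : ∃ n, P n := by
    obtain ⟨p, s, hps⟩ := qf_neg_exists a m b hsig'
    refine ⟨(-(qf a m b p s)-1).toNat, p, s, ?_⟩
    omega
  set n₀ := Nat.find hPex with hn₀def
  set b' : ℤ := -((n₀:ℤ)+1) with hb'def
  have hb'neg : b' < 0 := by
    have : (0:ℤ) ≤ (n₀:ℤ) := Int.natCast_nonneg _
    omega
  have hPspec : P n₀ := by rw [hn₀def]; exact Nat.find_spec hPex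
  obtain ⟨p, s, hps⟩ := hPspec
  rw [← hb'def] at hps
  have hmax : ∀ u v : ℤ, qf a m b u v < 0 → qf a m b u v ≤ b' := by
    intro u v huv
    have h1 : P (-(qf a m b u v)-1).toNat := ⟨u, v, by omega⟩
    have h2 : n₀ ≤ (-(qf a m b u v)-1).toNat := by rw [hn₀def]; exact Nat.find_min' hPex h1
    have h3 : (n₀:ℤ) ≤ ((-(qf a m b u v)-1).toNat : ℤ) := by exact_mod_cast h2
    omega
  -- coprimality
  have hpsneg : qf a m b p s < 0 := by rw [hps]; exact hb'neg
  have hgcdpos : 0 < Int.gcd p s := by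
    rcases Nat.eq_zero_or_pos (Int.gcd p s) with h | h
    · exfalso
      obtain ⟨h1, h2⟩ := Int.gcd_eq_zero_iff.mp h
      rw [h1, h2] at hpsneg
      simp [qf] at hpsneg
    · exact h
  obtain ⟨p₀, hp₀⟩ : ((Int.gcd p s : ℤ)) ∣ p := Int.gcd_dvd_left p s
  obtain ⟨s₀, hs₀⟩ : ((Int.gcd p s : ℤ)) ∣ s := Int.gcd_dvd_right p s
  set d : ℤ := (Int.gcd p s : ℤ) with hddef
  have hdpos : 0 < d := by rw [hddef]; exact_mod_cast hgcdpos
  have hscale : qf a m b p s = d^2 * qf a m b p₀ s₀ := by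
    rw [hp₀, hs₀]; simp only [qf]; ring
  have h00 : qf a m b p₀ s₀ < 0 := by nlinarith
  have h01 : qf a m b p₀ s₀ ≤ b' := hmax _ _ h00
  have hdsq : d^2 ≤ 1 := by nlinarith
  have hd1 : d = 1 := by nlinarith
  have hco : Int.gcd p s = 1 := by rw [hddef] at hd1; exact_mod_cast hd1
  -- Bezout
  set x := Int.gcdA p s with hxdef
  set y := Int.gcdB p s with hydef
  have hbez : p * x + s * y = 1 := by
    have h := Int.gcd_eq_gcd_ab p s
    rw [hco] at h
    push_cast at h
    linarith
  -- find k with nonnegative value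
  set a' : ℤ := qf a m b y (-x) with ha'def
  set m' : ℤ := a*y*p + m*(y*s + (-x)*p) + b*(-x)*s with hm'def
  have hDid : a' * b' - m'^2 = a*b - m^2 := by
    have h1 : (qf a m b y (-x)) * (qf a m b p s) - m'^2 = (a*b - m^2) * (p*x + s*y)^2 := by
      rw [hm'def]; simp only [qf]; ring
    rw [hps] at h1
    rw [ha'def, h1, hbez]; ring
  have hmaxk : ∀ k : ℤ, a' + 2*m'*k + b'*k^2 < 0 → a' + 2*m'*k + b'*k^2 ≤ b' := by
    intro k hk
    have hexp : a' + 2*m'*k + b'*k^2 = qf a m b (y + k*p) (-x + k*s) := by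
      rw [← hps, ha'def, hm'def]; simp only [qf]; ring
    rw [hexp] at hk ⊢
    exact hmax _ _ hk
  obtain ⟨k, hk⟩ := qf_key a' m' b' (a*b - m^2) hb'neg hDid hsig' hmaxk
  have h0 : 0 ≤ qf a m b (y + k*p) (-x + k*s) := by
    have hexp : a' + 2*m'*k + b'*k^2 = qf a m b (y + k*p) (-x + k*s) := by
      rw [← hps, ha'def, hm'def]; simp only [qf]; ring
    rw [← hexp]; exact hk
  -- sign choice
  set M2 : ℤ := a*(y+k*p)*p + m*((y+k*p)*s + (-x+k*s)*p) + b*(-x+k*s)*s with hM2def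
  obtain ⟨σ, hσ, hσM2⟩ : ∃ σ : ℤ, (σ = 1 ∨ σ = -1) ∧ 0 ≤ σ * M2 := by
    rcases le_or_gt 0 M2 with h | h
    · exact ⟨1, Or.inl rfl, by linarith⟩
    · exact ⟨-1, Or.inr rfl, by linarith⟩
  -- build the basis
  set A : Matrix (Fin 2) (Fin 2) ℤ := !![y + k*p, σ*p; -x + k*s, σ*s] with hAdef
  have hdetA : A.det = σ := by
    rw [hAdef, Matrix.det_fin_two_of]
    linear_combination σ * hbez
  have hAunit : IsUnit A.det := by
    rw [hdetA]
    rcases hσ with h | h <;> rw [h]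
    · exact isUnit_one
    · exact isUnit_one.neg
  set g : Module.Basis (Fin 2) ℤ Λ := bas.map (Matrix.toLinearEquiv bas A hAunit) with hgdef
  have hg0 : g 0 = (y + k*p) • e0 + (-x + k*s) • e1 := by
    rw [hgdef, Module.Basis.map_apply, Matrix.toLinearEquiv_apply, Matrix.toLin_self]
    simp [hAdef, Fin.sum_univ_two, he0, he1]
    simp [← Int.cast_smul_eq_zsmul ℤ]
  have hg1 : g 1 = (σ*p) • e0 + (σ*s) • e1 := by
    rw [hgdef, Module.Basis.map_apply, Matrix.toLinearEquiv_apply, Matrix.toLin_self]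
    simp [hAdef, Fin.sum_univ_two, he0, he1]
    simp [← Int.cast_smul_eq_zsmul ℤ]
  refine ⟨g, ?_, ?_, ?_⟩
  · rw [hg0, hQ]; exact h0
  · rw [hg0, hg1, hBval]
    have heq : a*(y+k*p)*(σ*p) + m*((y+k*p)*(σ*s) + (-x+k*s)*(σ*p)) + b*(-x+k*s)*(σ*s)
        = σ * M2 := by rw [hM2def]; ring
    rw [heq]; exact hσM2
  · rw [hg1, hQ]
    have hs2 : qf a m b (σ*p) (σ*s) = σ^2 * qf a m b p s := by simp only [qf]; ring
    have hσ2 : σ^2 = 1 := by rcases hσ with h | h <;> rw [h] <;> norm_num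
    rw [hs2, hσ2, hps]
    linarith
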